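/- If t ∈ H is a left integral and the antipode S of H is bijective, then S⁻¹(t₁) ⊗ ht₂ = S⁻¹(t₁)h ⊗ t₂ for all h ∈ H. -/

import Mathlib

open TensorProduct LinearMap

noncomputable section

variable (k : Type*) [Field k]
variable (H : Type*) [Ring H] [HopfAlgebra k H]
variable (A : Type*) [Ring A] [Algebra k A]

/-- A left partial action of a Hopf algebra `H` on an algebra `A` (Caenepeel–Janssen):
(PA1) `h·(ab) = (h₁·a)(h₂·b)`, (PA2) `1·a = a`, (PA3) `h·(g·a) = (h₁·1)((h₂g)·a)`. -/
structure PartialAction where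
  act : H →ₗ[k] A →ₗ[k] A
  pa1 : ∀ a b : A, act.flip (a * b) =
    LinearMap.mul' k A ∘ₗ TensorProduct.map (act.flip a) (act.flip b) ∘ₗ Coalgebra.comul
  pa2 : ∀ a : A, act 1 a = a
  pa3 : ∀ (g : H) (a : A), act.flip (act g a) =
    LinearMap.mul' k A ∘ₗ
      TensorProduct.map (act.flip 1) ((act.flip a) ∘ₗ LinearMap.mulRight k g) ∘ₗ Coalgebra.comul

variable {k H A}

/-- (PA4): the partial action is symmetric: `h·(g·a) = ((h₁g)·a)(h₂·1)`. -/
def PartialAction.IsSymmetric (α : PartialAction k H A) : Prop :=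
  ∀ (g : H) (a : A), α.act.flip (α.act g a) =
    LinearMap.mul' k A ∘ₗ
      TensorProduct.map ((α.act.flip a) ∘ₗ LinearMap.mulRight k g) (α.act.flip 1) ∘ₗ
        Coalgebra.comul

/-- Left invariants `A^H`. -/
def PartialAction.leftInv (α : PartialAction k H A) : Set A :=
  {a | ∀ h : H, α.act h a = a * α.act h 1}

/-- Right invariants `A^{H,r}`. -/
def PartialAction.rightInv (α : PartialAction k H A) : Set A :=
  {a | ∀ h : H, α.act h a = α.act h 1 * a}

/-- `t` is a left integral in `H`. -/
def IsLeftIntegral (t : H) : Prop := ∀ h : H, h * t = Coalgebra.counit (R := k) h • t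

/-- `t` is a right integral in `H`. -/
def IsRightIntegral (t : H) : Prop := ∀ h : H, t * h = Coalgebra.counit (R := k) h • t

/-- Convolution product on the dual `H* = H →ₗ[k] k`. -/
def conv (f g : H →ₗ[k] k) : H →ₗ[k] k :=
  LinearMap.mul' k k ∘ₗ TensorProduct.map f g ∘ₗ Coalgebra.comul

/-- `T ∈ H*` is a right integral: `T ∗ f = f(1) T`. -/
def IsRightIntegralDual (T : H →ₗ[k] k) : Prop := ∀ f : H →ₗ[k] k, conv T f = f 1 • T

/-- `T ∈ H*` is a left integral: `f ∗ T = f(1) T`. -/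
def IsLeftIntegralDual (T : H →ₗ[k] k) : Prop := ∀ f : H →ₗ[k] k, conv f T = f 1 • T

namespace PartialAction

variable (α : PartialAction k H A)

/-- `ψ (h ⊗ b) = Σ (h₁·b) ⊗ h₂`. -/
def psi : H ⊗[k] A →ₗ[k] A ⊗[k] H :=
  TensorProduct.map (TensorProduct.lift α.act) LinearMap.id
    ∘ₗ (TensorProduct.assoc k H A H).symm.toLinearMap
    ∘ₗ TensorProduct.map LinearMap.id (TensorProduct.comm k H A).toLinearMap
    ∘ₗ (TensorProduct.assoc k H H A).toLinearMap
    ∘ₗ TensorProduct.map Coalgebra.comul LinearMap.id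

/-- The smash product multiplication on `A ⊗ H`:
`(a # h)(b # g) = a(h₁·b) # h₂g`, as a linear map on the tensor square. -/
def smashMul' : (A ⊗[k] H) ⊗[k] (A ⊗[k] H) →ₗ[k] A ⊗[k] H :=
  TensorProduct.map (LinearMap.mul' k A) (LinearMap.mul' k H)
    ∘ₗ (TensorProduct.assoc k A A (H ⊗[k] H)).symm.toLinearMap
    ∘ₗ TensorProduct.map LinearMap.id
        ((TensorProduct.assoc k A H H).toLinearMap
          ∘ₗ TensorProduct.map α.psi LinearMap.id
          ∘ₗ (TensorProduct.assoc k H A H).symm.toLinearMap)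
    ∘ₗ (TensorProduct.assoc k A H (A ⊗[k] H)).toLinearMap

/-- The smash product multiplication, curried. -/
def sm : (A ⊗[k] H) →ₗ[k] (A ⊗[k] H) →ₗ[k] A ⊗[k] H := TensorProduct.curry α.smashMul'

/-- `1 # 1`. -/
def unit : A ⊗[k] H := (1 : A) ⊗ₜ[k] (1 : H)

/-- `j x = x · (1 # 1)`; the element `a #̲ h` of the partial smash product. -/
def j : A ⊗[k] H →ₗ[k] A ⊗[k] H := α.sm.flip (unit)

/-- The partial smash product `A #̲ H`, as a subspace of `A ⊗ H`. -/
def smash : Submodule k (A ⊗[k] H) := LinearMap.range α.j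

/-- The action of `A # H` on `A`: `(a # h) ▸ b = a (h·b)`. -/
def act2 : A ⊗[k] H →ₗ[k] A →ₗ[k] A :=
  TensorProduct.curry (LinearMap.mul' k A
    ∘ₗ TensorProduct.map LinearMap.id (TensorProduct.lift α.act)
    ∘ₗ (TensorProduct.assoc k A H A).toLinearMap)

end PartialAction

/-- `Φ(a # h) = a T(h)`. -/
def PhiMap (T : H →ₗ[k] k) : A ⊗[k] H →ₗ[k] A :=
  (TensorProduct.rid k A).toLinearMap ∘ₗ TensorProduct.map LinearMap.id T

/-- `θ(f) = f(t₁) t₂`. -/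
def thetaMap (t : H) : (H →ₗ[k] k) →ₗ[k] H :=
  (TensorProduct.lid k H).toLinearMap
    ∘ₗ LinearMap.applyₗ (Coalgebra.comul (R := k) t)
    ∘ₗ (TensorProduct.mapBilinear (RingHom.id k) H H k H).flip LinearMap.id

noncomputable section AuxHopfDev

open Coalgebra HopfAlgebra

variable {K : Type*} [CommSemiring K]

lemma aux_sum_counit_smul_right {B : Type*} [AddCommMonoid B] [Module K B] [Coalgebra K B] {a : B} {ι : Type*} (r : Coalgebra.Repr K a ι) :
    ∑ i ∈ r.index, Coalgebra.counit (R := K) (r.left i) • r.right i = a := by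
  have h := congrArg (TensorProduct.lid K B) (Coalgebra.sum_counit_tmul_eq r)
  rw [map_sum] at h
  simp only [TensorProduct.lid_tmul, one_smul] at h
  exact h

lemma aux_sum_counit_smul_left {B : Type*} [AddCommMonoid B] [Module K B] [Coalgebra K B] {a : B} {ι : Type*} (r : Coalgebra.Repr K a ι) :
    ∑ i ∈ r.index, Coalgebra.counit (R := K) (r.right i) • r.left i = a := by
  have h := congrArg (TensorProduct.rid K B) (Coalgebra.sum_tmul_counit_eq r)
  rw [map_sum] at h
  simp only [TensorProduct.rid_tmul, one_smul] at h
  exact h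

variable {B : Type*} [Semiring B]

/-- Product representation: `Δ(xy) = Δx Δy`. -/
def auxMulRepr [Bialgebra K B] {x y : B} {ι κ : Type*} (rx : Coalgebra.Repr K x ι) (ry : Coalgebra.Repr K y κ) :
    Coalgebra.Repr K (x * y) (ι × κ) where
  index := rx.index ×ˢ ry.index
  left := fun p => rx.left p.1 * ry.left p.2
  right := fun p => rx.right p.1 * ry.right p.2
  eq := by
    rw [Finset.sum_product, Bialgebra.comul_mul, ← rx.eq, ← ry.eq, Finset.sum_mul_sum]
    simp [Algebra.TensorProduct.tmul_mul_tmul]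

lemma aux_antipode_one [HopfAlgebra K B] : antipode (R := K) (1 : B) = 1 := by
  have h := mul_antipode_rTensor_comul_apply (R := K) (A := B) 1
  rw [Bialgebra.comul_one, Algebra.TensorProduct.one_def, LinearMap.rTensor_tmul,
    LinearMap.mul'_apply, Bialgebra.counit_one, mul_one] at h
  simpa using h

/-- `∑ S(a₁) a₂ ⊗ a₃ = 1 ⊗ a` (right-nested Sweedler grouping). -/
lemma aux_sum_antipode_mul_tmul [HopfAlgebra K B] {a : B} {ι κ : Type*} (r : Coalgebra.Repr K a ι)
    (r2 : ∀ i, Coalgebra.Repr K (r.right i) κ) :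
    ∑ i ∈ r.index, ∑ j ∈ (r2 i).index,
      (antipode (R := K) (r.left i) * (r2 i).left j) ⊗ₜ[K] (r2 i).right j
      = (1 : B) ⊗ₜ[K] a := by
  classical
  let r1 : ∀ i, Coalgebra.Repr K (r.left i) (B × B) := fun i => Coalgebra.Repr.arbitrary K _
  have key := Coalgebra.sum_tmul_tmul_eq r r1 r2
  let Ψ : B ⊗[K] (B ⊗[K] B) →ₗ[K] B ⊗[K] B :=
    LinearMap.rTensor B (LinearMap.mul' K B ∘ₗ LinearMap.rTensor B (antipode (R := K)))
      ∘ₗ (TensorProduct.assoc K B B B).symm.toLinearMap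
  have hΨ : ∀ x y z : B, Ψ (x ⊗ₜ[K] (y ⊗ₜ[K] z)) = (antipode (R := K) x * y) ⊗ₜ[K] z := by
    intro x y z
    simp [Ψ, TensorProduct.assoc_symm_tmul]
  have h1 := congrArg Ψ key
  simp only [map_sum, hΨ] at h1
  rw [← h1]
  have h2 : ∀ i ∈ r.index,
      ∑ j ∈ (r1 i).index,
        (antipode (R := K) ((r1 i).left j) * (r1 i).right j) ⊗ₜ[K] r.right i
      = Coalgebra.counit (R := K) (r.left i) • ((1 : B) ⊗ₜ[K] r.right i) := by
    intro i _
    rw [← TensorProduct.sum_tmul, sum_antipode_mul_eq_smul (r1 i), ← TensorProduct.smul_tmul']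
  rw [Finset.sum_congr rfl h2]
  simp only [← TensorProduct.tmul_smul]
  rw [← TensorProduct.tmul_sum, aux_sum_counit_smul_right r]


theorem aux_antipode_mul [HopfAlgebra K B] (a b : B) :
    antipode (R := K) (a * b) = antipode (R := K) b * antipode (R := K) a := by
  classical
  let ra : Coalgebra.Repr K a (B × B) := Coalgebra.Repr.arbitrary K a
  let rb : Coalgebra.Repr K b (B × B) := Coalgebra.Repr.arbitrary K b
  let ra2 : ∀ i, Coalgebra.Repr K (ra.right i) (B × B) := fun i => Coalgebra.Repr.arbitrary K _
  let rb2 : ∀ j, Coalgebra.Repr K (rb.right j) (B × B) := fun j => Coalgebra.Repr.arbitrary K _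
  have e12 :
      (∑ i ∈ ra.index, ∑ j ∈ rb.index, ∑ p ∈ (ra2 i).index, ∑ q ∈ (rb2 j).index,
        (antipode (R := K) (rb.left j) * (antipode (R := K) (ra.left i) * (ra2 i).left p)
            * (rb2 j).left q)
          * antipode (R := K) ((ra2 i).right p * (rb2 j).right q))
      = ∑ j ∈ rb.index, ∑ q ∈ (rb2 j).index, ∑ i ∈ ra.index, ∑ p ∈ (ra2 i).index,
        (antipode (R := K) (rb.left j) * (antipode (R := K) (ra.left i) * (ra2 i).left p)
            * (rb2 j).left q)
          * antipode (R := K) ((ra2 i).right p * (rb2 j).right q) := by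
    rw [Finset.sum_comm]
    refine Finset.sum_congr rfl fun j _ => ?_
    rw [Finset.sum_congr rfl fun i (_ : i ∈ ra.index) =>
      (Finset.sum_comm : ∑ p ∈ (ra2 i).index, ∑ q ∈ (rb2 j).index,
        (antipode (R := K) (rb.left j)
            * (antipode (R := K) (ra.left i) * (ra2 i).left p) * (rb2 j).left q)
          * antipode (R := K) ((ra2 i).right p * (rb2 j).right q) = _)]
    exact Finset.sum_comm
  have claim2 :
      (∑ j ∈ rb.index, ∑ q ∈ (rb2 j).index, ∑ i ∈ ra.index, ∑ p ∈ (ra2 i).index,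
        (antipode (R := K) (rb.left j) * (antipode (R := K) (ra.left i) * (ra2 i).left p)
            * (rb2 j).left q)
          * antipode (R := K) ((ra2 i).right p * (rb2 j).right q))
      = antipode (R := K) (a * b) := by
    have step1 : ∀ j ∈ rb.index, ∀ q ∈ (rb2 j).index,
        ∑ i ∈ ra.index, ∑ p ∈ (ra2 i).index,
          (antipode (R := K) (rb.left j) * (antipode (R := K) (ra.left i) * (ra2 i).left p)
              * (rb2 j).left q)
            * antipode (R := K) ((ra2 i).right p * (rb2 j).right q)
        = (antipode (R := K) (rb.left j) * (rb2 j).left q)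
            * antipode (R := K) (a * (rb2 j).right q) := by
      intro j _ q _
      let M : B ⊗[K] B →ₗ[K] B :=
        LinearMap.mul' K B ∘ₗ TensorProduct.map
          (LinearMap.mulRight K ((rb2 j).left q)
            ∘ₗ LinearMap.mulLeft K (antipode (R := K) (rb.left j)))
          ((antipode (R := K)) ∘ₗ LinearMap.mulRight K ((rb2 j).right q))
      have hM : ∀ u z : B, M (u ⊗ₜ[K] z)
          = (antipode (R := K) (rb.left j) * u * (rb2 j).left q)
            * antipode (R := K) (z * (rb2 j).right q) := by
        intro u z; simp [M]
      have h := congrArg M (aux_sum_antipode_mul_tmul ra ra2)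
      simp only [map_sum, hM, mul_one] at h
      exact h
    rw [Finset.sum_congr rfl fun j hj => Finset.sum_congr rfl fun q hq => step1 j hj q hq]
    let N : B ⊗[K] B →ₗ[K] B :=
      LinearMap.mul' K B ∘ₗ TensorProduct.map LinearMap.id
        ((antipode (R := K)) ∘ₗ LinearMap.mulLeft K a)
    have hN : ∀ u z : B, N (u ⊗ₜ[K] z) = u * antipode (R := K) (a * z) := by
      intro u z; simp [N]
    have h := congrArg N (aux_sum_antipode_mul_tmul rb rb2)
    simp only [map_sum, hN, one_mul] at h
    exact h
  have claim1 :
      (∑ i ∈ ra.index, ∑ j ∈ rb.index, ∑ p ∈ (ra2 i).index, ∑ q ∈ (rb2 j).index,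
        (antipode (R := K) (rb.left j) * (antipode (R := K) (ra.left i) * (ra2 i).left p)
            * (rb2 j).left q)
          * antipode (R := K) ((ra2 i).right p * (rb2 j).right q))
      = antipode (R := K) b * antipode (R := K) a := by
    have inner : ∀ i ∈ ra.index, ∀ j ∈ rb.index,
        ∑ p ∈ (ra2 i).index, ∑ q ∈ (rb2 j).index,
          (antipode (R := K) (rb.left j) * (antipode (R := K) (ra.left i) * (ra2 i).left p)
              * (rb2 j).left q)
            * antipode (R := K) ((ra2 i).right p * (rb2 j).right q)
        = (Coalgebra.counit (R := K) (ra.right i) * Coalgebra.counit (R := K) (rb.right j)) •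
            (antipode (R := K) (rb.left j) * antipode (R := K) (ra.left i)) := by
      intro i _ j _
      have hprod := sum_mul_antipode_eq_smul (auxMulRepr (ra2 i) (rb2 j))
      simp only [auxMulRepr] at hprod
      rw [Finset.sum_product] at hprod
      calc ∑ p ∈ (ra2 i).index, ∑ q ∈ (rb2 j).index,
            (antipode (R := K) (rb.left j) * (antipode (R := K) (ra.left i) * (ra2 i).left p)
                * (rb2 j).left q)
              * antipode (R := K) ((ra2 i).right p * (rb2 j).right q)
          = ∑ p ∈ (ra2 i).index, ∑ q ∈ (rb2 j).index,
            (antipode (R := K) (rb.left j) * antipode (R := K) (ra.left i)) *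
              (((ra2 i).left p * (rb2 j).left q)
                * antipode (R := K) ((ra2 i).right p * (rb2 j).right q)) := by
            refine Finset.sum_congr rfl fun p _ => Finset.sum_congr rfl fun q _ => ?_
            simp only [mul_assoc]
        _ = (antipode (R := K) (rb.left j) * antipode (R := K) (ra.left i)) *
              ∑ p ∈ (ra2 i).index, ∑ q ∈ (rb2 j).index,
                ((ra2 i).left p * (rb2 j).left q)
                  * antipode (R := K) ((ra2 i).right p * (rb2 j).right q) := by
            simp only [Finset.mul_sum]
        _ = (Coalgebra.counit (R := K) (ra.right i) * Coalgebra.counit (R := K) (rb.right j)) •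
              (antipode (R := K) (rb.left j) * antipode (R := K) (ra.left i)) := by
            rw [hprod, Bialgebra.counit_mul, mul_smul_comm, mul_one]
    rw [Finset.sum_congr rfl fun i hi => Finset.sum_congr rfl fun j hj => inner i hi j hj]
    have hb : antipode (R := K) b
        = ∑ j ∈ rb.index, Coalgebra.counit (R := K) (rb.right j) • antipode (R := K) (rb.left j) := by
      conv_lhs => rw [← aux_sum_counit_smul_left rb]
      rw [map_sum]
      exact Finset.sum_congr rfl fun j _ => map_smul _ _ _
    have ha : antipode (R := K) a
        = ∑ i ∈ ra.index, Coalgebra.counit (R := K) (ra.right i) • antipode (R := K) (ra.left i) := by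
      conv_lhs => rw [← aux_sum_counit_smul_left ra]
      rw [map_sum]
      exact Finset.sum_congr rfl fun i _ => map_smul _ _ _
    rw [hb, ha, Finset.sum_mul_sum, Finset.sum_comm]
    refine Finset.sum_congr rfl fun i _ => Finset.sum_congr rfl fun j _ => ?_
    rw [smul_mul_assoc, mul_smul_comm, smul_smul, mul_comm]
  rw [← claim2, ← e12, claim1]


def auxPhi {K : Type*} [CommSemiring K] {B : Type*} [Semiring B] [Algebra K B]
    (Sinv : B →ₗ[K] B) (a b : B) : B ⊗[K] (B ⊗[K] B) →ₗ[K] B ⊗[K] B :=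
  LinearMap.rTensor B (LinearMap.mul' K B ∘ₗ (TensorProduct.comm K B B).toLinearMap)
    ∘ₗ (TensorProduct.assoc K B B B).symm.toLinearMap
    ∘ₗ LinearMap.lTensor B (TensorProduct.map
        (LinearMap.mulLeft K (Sinv a) ∘ₗ Sinv) (LinearMap.mulRight K b))

lemma auxPhi_tmul {K : Type*} [CommSemiring K] {B : Type*} [Semiring B] [Algebra K B]
    (Sinv : B →ₗ[K] B) (a b : B) (x y z : B) :
    auxPhi Sinv a b (x ⊗ₜ[K] (y ⊗ₜ[K] z)) = (Sinv a * Sinv y * x) ⊗ₜ[K] (z * b) := by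
  simp [auxPhi]

end AuxHopfDev

/-- if `t` is a left integral and the antipode is bijective (with inverse
`Sinv`), then `S⁻¹(t₁) ⊗ ht₂ = S⁻¹(t₁)h ⊗ t₂` for all `h`. -/
theorem leftIntegral_twist_inv
    {k : Type*} [Field k] {H : Type*} [Ring H] [HopfAlgebra k H]
    (t : H) (ht : IsLeftIntegral (k := k) t) (Sinv : H →ₗ[k] H)
    (hS1 : ∀ x : H, Sinv (HopfAlgebra.antipode (R := k) x) = x)
    (hS2 : ∀ x : H, HopfAlgebra.antipode (R := k) (Sinv x) = x) (h : H) :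
    TensorProduct.map Sinv (LinearMap.mulLeft k h) (Coalgebra.comul (R := k) t) =
      TensorProduct.map ((LinearMap.mulRight k h) ∘ₗ Sinv) LinearMap.id
        (Coalgebra.comul (R := k) t) := by
  classical
  have Sinj : Function.Injective (HopfAlgebra.antipode (R := k) (A := H)) :=
    fun x y hxy => by rw [← hS1 x, hxy, hS1]
  have Sinv_mul : ∀ x y : H, Sinv (x * y) = Sinv y * Sinv x := by
    intro x y
    apply Sinj
    rw [hS2, aux_antipode_mul, hS2, hS2]
  let rt : Coalgebra.Repr k t (H × H) := Coalgebra.Repr.arbitrary k t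
  let rh : Coalgebra.Repr k h (H × H) := Coalgebra.Repr.arbitrary k h
  let rh1 : ∀ j, Coalgebra.Repr k (rh.left j) (H × H) := fun j => Coalgebra.Repr.arbitrary k _
  let rh2 : ∀ j, Coalgebra.Repr k (rh.right j) (H × H) := fun j => Coalgebra.Repr.arbitrary k _
  have C1 : ∀ (c : H) (r : Coalgebra.Repr k c (H × H)),
      ∑ l ∈ r.index, Sinv (r.right l) * r.left l = Coalgebra.counit (R := k) c • (1 : H) := by
    intro c r
    apply Sinj
    rw [map_sum, map_smul, aux_antipode_one]
    rw [show (∑ l ∈ r.index, HopfAlgebra.antipode (R := k) (Sinv (r.right l) * r.left l))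
        = ∑ l ∈ r.index, HopfAlgebra.antipode (R := k) (r.left l) * r.right l from
      Finset.sum_congr rfl fun l _ => by rw [aux_antipode_mul, hS2]]
    exact HopfAlgebra.sum_antipode_mul_eq_smul r
  have star : ∀ (g : H) (rg : Coalgebra.Repr k g (H × H)),
      ∑ m ∈ rg.index, ∑ i ∈ rt.index,
        (Sinv (rt.left i) * Sinv (rg.left m)) ⊗ₜ[k] (rg.right m * rt.right i)
      = Coalgebra.counit (R := k) g • ∑ i ∈ rt.index, Sinv (rt.left i) ⊗ₜ[k] rt.right i := by
    intro g rg
    have h1 : Coalgebra.comul (R := k) (g * t)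
        = Coalgebra.counit (R := k) g • Coalgebra.comul (R := k) t := by
      rw [ht g, map_smul]
    rw [Bialgebra.comul_mul, ← rg.eq, ← rt.eq, Finset.sum_mul_sum] at h1
    simp only [Algebra.TensorProduct.tmul_mul_tmul] at h1
    have h2 := congrArg (TensorProduct.map Sinv (LinearMap.id (R := k) (M := H))) h1
    simp only [map_sum, map_smul, TensorProduct.map_tmul, LinearMap.id_coe, id_eq,
      Sinv_mul] at h2
    exact h2
  -- transform the goal into sums
  rw [← rt.eq, map_sum, map_sum]
  simp only [TensorProduct.map_tmul, LinearMap.mulLeft_apply, LinearMap.coe_comp,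
    Function.comp_apply, LinearMap.mulRight_apply, LinearMap.id_coe, id_eq]
  have key := Coalgebra.sum_tmul_tmul_eq rh rh1 rh2
  have hAB :
      (∑ i ∈ rt.index, ∑ j ∈ rh.index, ∑ l ∈ (rh1 j).index,
        (Sinv (rt.left i) * Sinv ((rh1 j).right l) * (rh1 j).left l)
          ⊗ₜ[k] (rh.right j * rt.right i))
      = ∑ i ∈ rt.index, ∑ j ∈ rh.index, ∑ m ∈ (rh2 j).index,
        (Sinv (rt.left i) * Sinv ((rh2 j).left m) * rh.left j)
          ⊗ₜ[k] ((rh2 j).right m * rt.right i) := by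
    refine Finset.sum_congr rfl fun i _ => ?_
    have h3 := congrArg (auxPhi Sinv (rt.left i) (rt.right i)) key
    simpa only [map_sum, auxPhi_tmul] using h3
  have hA :
      (∑ i ∈ rt.index, ∑ j ∈ rh.index, ∑ l ∈ (rh1 j).index,
        (Sinv (rt.left i) * Sinv ((rh1 j).right l) * (rh1 j).left l)
          ⊗ₜ[k] (rh.right j * rt.right i))
      = ∑ i ∈ rt.index, Sinv (rt.left i) ⊗ₜ[k] (h * rt.right i) := by
    refine Finset.sum_congr rfl fun i _ => ?_
    have inner : ∀ j ∈ rh.index,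
        ∑ l ∈ (rh1 j).index,
          (Sinv (rt.left i) * Sinv ((rh1 j).right l) * (rh1 j).left l)
            ⊗ₜ[k] (rh.right j * rt.right i)
        = Coalgebra.counit (R := k) (rh.left j) •
            (Sinv (rt.left i) ⊗ₜ[k] (rh.right j * rt.right i)) := by
      intro j _
      rw [← TensorProduct.sum_tmul]
      have hs : (∑ l ∈ (rh1 j).index,
            Sinv (rt.left i) * Sinv ((rh1 j).right l) * (rh1 j).left l)
          = Coalgebra.counit (R := k) (rh.left j) • Sinv (rt.left i) := by
        simp only [mul_assoc]
        rw [← Finset.mul_sum, C1 _ (rh1 j), mul_smul_comm, mul_one]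
      rw [hs, ← TensorProduct.smul_tmul']
    rw [Finset.sum_congr rfl inner]
    simp only [← TensorProduct.tmul_smul]
    rw [← TensorProduct.tmul_sum]
    congr 1
    simp only [← smul_mul_assoc]
    rw [← Finset.sum_mul, aux_sum_counit_smul_right rh]
  have hB1 : ∀ j ∈ rh.index,
      ∑ m ∈ (rh2 j).index, ∑ i ∈ rt.index,
        (Sinv (rt.left i) * Sinv ((rh2 j).left m) * rh.left j)
          ⊗ₜ[k] ((rh2 j).right m * rt.right i)
      = Coalgebra.counit (R := k) (rh.right j) •
          ∑ i ∈ rt.index, (Sinv (rt.left i) * rh.left j) ⊗ₜ[k] rt.right i := by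
    intro j _
    have h4 := congrArg
      (TensorProduct.map (LinearMap.mulRight k (rh.left j)) (LinearMap.id (R := k) (M := H)))
      (star (rh.right j) (rh2 j))
    simpa only [map_sum, map_smul, TensorProduct.map_tmul, LinearMap.mulRight_apply,
      LinearMap.id_coe, id_eq] using h4
  have hB :
      (∑ i ∈ rt.index, ∑ j ∈ rh.index, ∑ m ∈ (rh2 j).index,
        (Sinv (rt.left i) * Sinv ((rh2 j).left m) * rh.left j)
          ⊗ₜ[k] ((rh2 j).right m * rt.right i))
      = ∑ i ∈ rt.index, (Sinv (rt.left i) * h) ⊗ₜ[k] rt.right i := by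
    rw [Finset.sum_comm]
    rw [Finset.sum_congr rfl fun j (_ : j ∈ rh.index) =>
      (Finset.sum_comm : ∑ i ∈ rt.index, ∑ m ∈ (rh2 j).index,
        (Sinv (rt.left i) * Sinv ((rh2 j).left m) * rh.left j)
          ⊗ₜ[k] ((rh2 j).right m * rt.right i) = _)]
    rw [Finset.sum_congr rfl hB1]
    simp only [Finset.smul_sum]
    rw [Finset.sum_comm]
    refine Finset.sum_congr rfl fun i _ => ?_
    simp only [TensorProduct.smul_tmul']
    rw [← TensorProduct.sum_tmul]
    congr 1
    simp only [← mul_smul_comm]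
    rw [← Finset.mul_sum, aux_sum_counit_smul_left rh]
  rw [← hA, ← hB]
  exact hAB


end
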